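/- In the real space ℓ₁² (ℝ² with the ℓ¹ norm), for the vector x = (3/4, −1/4) there is no nonzero y ∈ ℓ₁² with x Roberts-orthogonal to y, i.e., with ‖x + λy‖ = ‖x − λy‖ for all λ ∈ ℝ. Hence Roberts orthogonality fails the existence property in general normed spaces. -/

import Mathlib

lemma l1_norm_two (v : PiLp 1 (fun _ : Fin 2 => ℝ)) : ‖v‖ = |v 0| + |v 1| := by
  rw [PiLp.norm_eq_sum (by norm_num)]
  simp [Fin.sum_univ_two, Real.norm_eq_abs]

theorem stmt_6 :
    ∀ y : PiLp 1 (fun _ : Fin 2 => ℝ), y ≠ 0 →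
      ¬ (∀ l : ℝ,
        ‖(WithLp.equiv 1 (Fin 2 → ℝ)).symm ![3/4, -1/4] + l • y‖ =
        ‖(WithLp.equiv 1 (Fin 2 → ℝ)).symm ![3/4, -1/4] - l • y‖) := by
  intro y hy h
  set a := y 0 with ha
  set b := y 1 with hb
  have key : ∀ l : ℝ, |3/4 + l*a| + |(-1)/4 + l*b| = |3/4 - l*a| + |(-1)/4 - l*b| := by
    intro l
    have := h l
    rw [l1_norm_two, l1_norm_two] at this
    simpa [PiLp.add_apply, PiLp.sub_apply, PiLp.smul_apply,
      PiLp.toLp_apply, WithLp.equiv_symm_apply, smul_eq_mul, ← ha, ← hb] using this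
  by_cases hA : a = 0
  · have hB : b ≠ 0 := by
      intro hB
      apply hy
      ext i
      fin_cases i
      · simpa using hA
      · simpa using hB
    have := key (1/(4*b))
    have hlb : (1/(4*b))*b = 1/4 := by field_simp
    rw [hA, hlb] at this
    norm_num at this
  · have := key (3/(4*a))
    have hla : (3/(4*a))*a = 3/4 := by field_simp
    rw [hla] at this
    set t := (3/(4*a))*b with ht
    have h1 : |(3:ℝ)/4 + 3/4| = 3/2 := by norm_num
    have h2 : |(3:ℝ)/4 - 3/4| = 0 := by norm_num
    rw [h1, h2] at this
    rcases abs_cases ((-1)/4 + t) with ⟨e1, _⟩ | ⟨e1, _⟩ <;>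
      rcases abs_cases ((-1)/4 - t) with ⟨e2, _⟩ | ⟨e2, _⟩ <;> linarith
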